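/- Let n ≥ q ≥ 1 be integers, let v ∈ ℝⁿ have all entries positive, and let f : ℝ^{n×q} → ℝ satisfy f(X D_i) = f(X) for every X ∈ ℝ^{n×q} and every i ∈ {1,…,q}, where D_i is the diagonal matrix whose i-th diagonal entry is −1 and all other diagonal entries are 1. For X ∈ B_v define ϑ(X) = X D, where D is the diagonal matrix with D_{jj} = −1 if all nonzero entries of the j-th column of X are negative and D_{jj} = 1 otherwise. Then X_* ∈ B_v satisfies f(X_*) ≤ f(Y) for all Y ∈ B_v if and only if ϑ(X_*) ∈ A_v and f(ϑ(X_*)) ≤ f(Z) for all Z ∈ A_v. -/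

import Mathlib

open Matrix

/-- `A_v`: matrices with orthonormal columns, all entries nonnegative, `v` in column space. -/
def Av (n q : ℕ) (v : Fin n → ℝ) : Set (Matrix (Fin n) (Fin q) ℝ) :=
  {X | Xᵀ * X = 1 ∧ (∀ i j, 0 ≤ X i j) ∧ ∃ c : Fin q → ℝ, X *ᵥ c = v}

/-- `B_v`: matrices with orthonormal columns, exactly `n` nonzero entries, `v` in column space. -/
def Bv (n q : ℕ) (v : Fin n → ℝ) : Set (Matrix (Fin n) (Fin q) ℝ) :=
  {X | Xᵀ * X = 1 ∧ {p : Fin n × Fin q | X p.1 p.2 ≠ 0}.ncard = n ∧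
    ∃ c : Fin q → ℝ, X *ᵥ c = v}

open scoped Classical in
/-- `ϑ(X) = X D` where `D` is diagonal with `D_{jj} = -1` if all nonzero entries of the `j`-th
column of `X` are negative, and `D_{jj} = 1` otherwise. -/
noncomputable def theta {n q : ℕ} (X : Matrix (Fin n) (Fin q) ℝ) :
    Matrix (Fin n) (Fin q) ℝ :=
  X * Matrix.diagonal (fun j => if (∀ i, X i j ≠ 0 → X i j < 0) then (-1 : ℝ) else 1)

open Matrix Finset

open scoped Classical

section Aux

variable {n q : ℕ}

/-- f is invariant under multiplication by any ±1 diagonal matrix. -/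
lemma f_mul_pm (f : Matrix (Fin n) (Fin q) ℝ → ℝ)
    (hf : ∀ (X : Matrix (Fin n) (Fin q) ℝ) (i : Fin q),
      f (X * Matrix.diagonal (fun j => if j = i then (-1 : ℝ) else 1)) = f X)
    (d : Fin q → ℝ) (hd : ∀ j, d j = 1 ∨ d j = -1) (X : Matrix (Fin n) (Fin q) ℝ) :
    f (X * Matrix.diagonal d) = f X := by
  have key : ∀ s : Finset (Fin q), ∀ X : Matrix (Fin n) (Fin q) ℝ,
      f (X * Matrix.diagonal (fun j => if j ∈ s then (-1 : ℝ) else 1)) = f X := by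
    intro s
    induction s using Finset.induction_on with
    | empty => intro X; simp
    | insert a s ha ih =>
      intro X
      have hfun : Matrix.diagonal (fun j => if j ∈ insert a s then (-1 : ℝ) else 1)
          = Matrix.diagonal (fun j => if j ∈ s then (-1 : ℝ) else 1)
            * Matrix.diagonal (fun j => if j = a then (-1 : ℝ) else 1) := by
        rw [Matrix.diagonal_mul_diagonal]
        refine congrArg _ (funext fun j => ?_)
        by_cases hj : j = a
        · subst hj; simp [ha]
        · by_cases hj2 : j ∈ s <;> simp [hj, hj2]
      rw [hfun, ← Matrix.mul_assoc, hf, ih]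
  have hdfun : d = fun j => if j ∈ Finset.univ.filter (fun j => d j = -1) then (-1 : ℝ) else 1 := by
    funext j
    rcases hd j with h | h <;> simp [h] <;> norm_num
  rw [hdfun]
  exact key _ X

lemma ncard_sum (X : Matrix (Fin n) (Fin q) ℝ) :
    {p : Fin n × Fin q | X p.1 p.2 ≠ 0}.ncard
      = ∑ i, (Finset.univ.filter fun j => X i j ≠ 0).card := by
  rw [Set.ncard_eq_toFinset_card', Set.toFinset_setOf]
  simp only [Finset.card_filter]
  rw [Fintype.sum_prod_type]

lemma row_nonempty {v : Fin n → ℝ} {c : Fin q → ℝ} (hv : ∀ i, 0 < v i)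
    {X : Matrix (Fin n) (Fin q) ℝ} (hc : X *ᵥ c = v) (i : Fin n) :
    ∃ j, X i j ≠ 0 := by
  by_contra h
  push_neg at h
  have : v i = 0 := by
    rw [← hc]
    simp [Matrix.mulVec, dotProduct, h]
  exact (hv i).ne' this

/-- Structure of a matrix in `Bv`: each row has a unique nonzero entry, determined by a
function `J`, and the corresponding entry times `c` is positive. -/
lemma Bv_struct {v : Fin n → ℝ} (hv : ∀ i, 0 < v i) {X : Matrix (Fin n) (Fin q) ℝ}
    (hX : X ∈ Bv n q v) :
    ∃ (c : Fin q → ℝ) (J : Fin n → Fin q), X *ᵥ c = v ∧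
      (∀ i j, X i j ≠ 0 ↔ j = J i) ∧ (∀ i, 0 < X i (J i) * c (J i)) := by
  obtain ⟨hX1, hX2, c, hc⟩ := hX
  have hrow := fun i => row_nonempty hv hc i
  have hcard1 : ∀ i, (Finset.univ.filter fun j => X i j ≠ 0).card = 1 := by
    have hle : ∀ i ∈ (Finset.univ : Finset (Fin n)),
        1 ≤ (Finset.univ.filter fun j => X i j ≠ 0).card := by
      intro i _
      obtain ⟨j, hj⟩ := hrow i
      exact Finset.card_pos.mpr ⟨j, by simp [hj]⟩
    have hsum : ∑ i : Fin n, (1 : ℕ) = ∑ i, (Finset.univ.filter fun j => X i j ≠ 0).card := by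
      rw [← ncard_sum, hX2]; simp
    intro i
    exact ((Finset.sum_eq_sum_iff_of_le hle).mp hsum i (Finset.mem_univ i)).symm
  have hJ : ∀ i, ∃ j, (Finset.univ.filter fun j => X i j ≠ 0) = {j} := by
    intro i; exact Finset.card_eq_one.mp (hcard1 i)
  choose J hJ using hJ
  have hiff : ∀ i j, X i j ≠ 0 ↔ j = J i := by
    intro i j
    constructor
    · intro h
      have : j ∈ (Finset.univ.filter fun j => X i j ≠ 0) := by simp [h]
      rw [hJ i] at this
      exact Finset.mem_singleton.mp this
    · intro h
      subst h
      have : J i ∈ (Finset.univ.filter fun j => X i j ≠ 0) := by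
        rw [hJ i]; exact Finset.mem_singleton_self _
      simpa using this
  refine ⟨c, J, hc, hiff, fun i => ?_⟩
  have hvi : v i = ∑ j, X i j * c j := by
    rw [← hc]; rfl
  have : ∑ j, X i j * c j = X i (J i) * c (J i) := by
    apply Finset.sum_eq_single
    · intro j _ hj
      have : X i j = 0 := by
        by_contra h
        exact hj ((hiff i j).mp h)
      rw [this, zero_mul]
    · intro h; exact absurd (Finset.mem_univ _) h
  rw [← this, ← hvi]
  exact hv i

lemma theta_spec {n q : ℕ} (X : Matrix (Fin n) (Fin q) ℝ) :
    theta X = X * Matrix.diagonal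
      (fun j => if (∀ i, X i j ≠ 0 → X i j < 0) then (-1 : ℝ) else 1) := rfl

lemma theta_mem_Av {v : Fin n → ℝ} (hv : ∀ i, 0 < v i) {X : Matrix (Fin n) (Fin q) ℝ}
    (hX : X ∈ Bv n q v) : theta X ∈ Av n q v := by
  obtain ⟨c, J, hc, hiff, hpos⟩ := Bv_struct hv hX
  obtain ⟨hX1, hX2, -⟩ := hX
  set d : Fin q → ℝ := fun j => if (∀ i, X i j ≠ 0 → X i j < 0) then (-1 : ℝ) else 1 with hd_def
  have hd : ∀ j, d j = 1 ∨ d j = -1 := by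
    intro j
    by_cases h : (∀ i, X i j ≠ 0 → X i j < 0)
    · right; exact if_pos h
    · left; exact if_neg h
  have hdd : ∀ j, d j * d j = 1 := by
    intro j; rcases hd j with h | h <;> rw [h] <;> norm_num
  refine ⟨?_, ?_, ?_⟩
  · rw [theta_spec, ← hd_def, Matrix.transpose_mul, Matrix.diagonal_transpose,
      Matrix.mul_assoc, ← Matrix.mul_assoc Xᵀ, hX1, Matrix.one_mul,
      Matrix.diagonal_mul_diagonal, ← Matrix.diagonal_one]
    exact congrArg _ (funext hdd)
  · intro i j
    rw [theta_spec, ← hd_def, Matrix.mul_diagonal]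
    by_cases h0 : X i j = 0
    · rw [h0, zero_mul]
    · have hjJ : j = J i := (hiff i j).mp h0
      subst hjJ
      by_cases hP : (∀ i', X i' (J i) ≠ 0 → X i' (J i) < 0)
      · have hneg : X i (J i) < 0 := hP i h0
        have : d (J i) = -1 := if_pos hP
        rw [this]
        nlinarith
      · push_neg at hP
        obtain ⟨i', hi'0, hi'⟩ := hP
        have hjJ' : J i = J i' := (hiff i' (J i)).mp hi'0
        have hXi' : 0 < X i' (J i) := lt_of_le_of_ne hi' (Ne.symm hi'0)
        have hci : 0 < c (J i) := by
          have := hpos i'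
          rw [← hjJ'] at this
          nlinarith
        have hXi : 0 < X i (J i) := by
          have := hpos i
          nlinarith
        have : d (J i) = 1 := by
          apply if_neg
          push_neg
          exact ⟨i', hi'0, hi'⟩
        rw [this, mul_one]
        exact le_of_lt hXi
  · refine ⟨fun j => d j * c j, ?_⟩
    rw [theta_spec, ← hd_def, ← Matrix.mulVec_mulVec]
    have : (Matrix.diagonal d *ᵥ fun j => d j * c j) = c := by
      funext j
      rw [Matrix.mulVec_diagonal, ← mul_assoc, hdd j, one_mul]
    rw [this, hc]

lemma Av_subset_Bv {v : Fin n → ℝ} (hv : ∀ i, 0 < v i) : Av n q v ⊆ Bv n q v := by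
  rintro X ⟨hX1, hX2, c, hc⟩
  refine ⟨hX1, ?_, c, hc⟩
  have hrow := fun i => row_nonempty hv hc i
  have huniq : ∀ i j j', X i j ≠ 0 → X i j' ≠ 0 → j = j' := by
    intro i j j' h h'
    by_contra hne
    have h0 : (Xᵀ * X) j j' = 0 := by
      rw [hX1, Matrix.one_apply_ne hne]
    rw [Matrix.mul_apply] at h0
    have hnn : ∀ k ∈ (Finset.univ : Finset (Fin n)), 0 ≤ Xᵀ j k * X k j' :=
      fun k _ => mul_nonneg (hX2 k j) (hX2 k j')
    have := (Finset.sum_eq_zero_iff_of_nonneg hnn).mp h0 i (Finset.mem_univ i)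
    rw [Matrix.transpose_apply] at this
    exact (mul_ne_zero h h') this
  rw [ncard_sum]
  have hcard1 : ∀ i, (Finset.univ.filter fun j => X i j ≠ 0).card = 1 := by
    intro i
    obtain ⟨j, hj⟩ := hrow i
    rw [Finset.card_eq_one]
    refine ⟨j, ?_⟩
    ext j'
    simp only [Finset.mem_filter, Finset.mem_univ, true_and, Finset.mem_singleton]
    constructor
    · intro h; exact huniq i j' j h hj
    · intro h; subst h; exact hj
  simp [hcard1]

lemma theta_f_eq (f : Matrix (Fin n) (Fin q) ℝ → ℝ)
    (hf : ∀ (X : Matrix (Fin n) (Fin q) ℝ) (i : Fin q),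
      f (X * Matrix.diagonal (fun j => if j = i then (-1 : ℝ) else 1)) = f X)
    (X : Matrix (Fin n) (Fin q) ℝ) : f (theta X) = f X := by
  rw [theta_spec]
  apply f_mul_pm f hf
  intro j
  by_cases h : (∀ i, X i j ≠ 0 → X i j < 0)
  · right; exact if_pos h
  · left; exact if_neg h

end Aux

/-- If `f (X D_i) = f X` for all `X` and all `i` (where `D_i` is the diagonal
matrix with `-1` at position `i` and `1` elsewhere), then `X_* ∈ B_v` is a global minimizer
of `f` over `B_v` iff `ϑ(X_*) ∈ A_v` and `ϑ(X_*)` is a global minimizer of `f` over `A_v`. -/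
theorem stmt_1 (n q : ℕ) (hq : 1 ≤ q) (hnq : q ≤ n)
    (v : Fin n → ℝ) (hv : ∀ i, 0 < v i)
    (f : Matrix (Fin n) (Fin q) ℝ → ℝ)
    (hf : ∀ (X : Matrix (Fin n) (Fin q) ℝ) (i : Fin q),
      f (X * Matrix.diagonal (fun j => if j = i then (-1 : ℝ) else 1)) = f X)
    (Xs : Matrix (Fin n) (Fin q) ℝ) (hXs : Xs ∈ Bv n q v) :
    (∀ Y ∈ Bv n q v, f Xs ≤ f Y) ↔
      (theta Xs ∈ Av n q v ∧ ∀ Z ∈ Av n q v, f (theta Xs) ≤ f Z) := by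
  obtain ⟨hB1, hB2, cs, hcs⟩ := hXs
  constructor
  · intro hmin
    refine ⟨theta_mem_Av hv ⟨hB1, hB2, cs, hcs⟩, ?_⟩
    intro Z hZ
    rw [theta_f_eq f hf]
    exact hmin Z (Av_subset_Bv hv hZ)
  · rintro ⟨hA, hmin⟩
    intro Y hY
    have h1 : f Xs = f (theta Xs) := (theta_f_eq f hf Xs).symm
    have h2 : f (theta Y) = f Y := theta_f_eq f hf Y
    rw [h1, ← h2]
    exact hmin (theta Y) (theta_mem_Av hv hY)
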